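/- For ρ ∈ ℂ with Re(ρ) > -1 and any m ∈ ℤ≥0, the function x ↦ x^ρ (ln x)^m satisfies (P - 1/(ρ+1))^{m+1}[x^ρ (ln x)^m] = 0, i.e., it is a generalized eigenfunction of the Cesàro operator P with eigenvalue 1/(ρ+1). -/

import Mathlib

open Filter intervalIntegral

/-- The continuous Cesàro operator. -/
noncomputable def cesaroP (f : ℝ → ℂ) : ℝ → ℂ :=
  fun x => (1 / (x : ℂ)) * ∫ t in (0 : ℝ)..x, f t

/-- The operator `P - λ·Id` acting on functions. -/
noncomputable def cesaroPSub (lam : ℂ) (f : ℝ → ℂ) : ℝ → ℂ :=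
  fun x => cesaroP f x - lam * f x

open MeasureTheory Set Topology

noncomputable def gfun (ρ : ℂ) (k : ℕ) : ℝ → ℂ :=
  fun y => (y : ℂ) ^ ρ * (Real.log y : ℂ) ^ k

lemma gfun_continuousAt (ρ : ℂ) (k : ℕ) {t : ℝ} (ht : 0 < t) :
    ContinuousAt (gfun ρ k) t := by
  exact (Complex.continuousAt_ofReal_cpow_const t ρ (Or.inr ht.ne')).mul
    (((Complex.continuous_ofReal.continuousAt).comp (Real.continuousAt_log ht.ne')).pow k)

lemma gfun_norm (ρ : ℂ) (k : ℕ) {t : ℝ} (ht : 0 < t) :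
    ‖gfun ρ k t‖ = t ^ ρ.re * |Real.log t| ^ k := by
  simp only [gfun, norm_mul, norm_pow, Complex.norm_real, Real.norm_eq_abs,
    Complex.norm_cpow_eq_rpow_re_of_pos ht]

lemma tendsto_rpow_mul_abs_log_pow {a : ℝ} (ha : 0 < a) (n : ℕ) :
    Tendsto (fun t : ℝ => t ^ a * |Real.log t| ^ n) (𝓝[>] 0) (𝓝 0) := by
  rcases Nat.eq_zero_or_pos n with hn | hn
  · subst hn
    have : Tendsto (fun t : ℝ => t ^ a) (𝓝[>] 0) (𝓝 0) := by
      have := (Real.continuousAt_rpow_const 0 a (Or.inr ha.le)).continuousWithinAt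
        (s := Ioi (0:ℝ))
      simpa [ContinuousWithinAt, Real.zero_rpow ha.ne'] using this
    simpa using this
  · have hn' : (0:ℝ) < a / n := by positivity
    have h1 : Tendsto (fun t : ℝ => |Real.log t * t ^ (a / n)|) (𝓝[>] 0) (𝓝 0) := by
      simpa using (tendsto_log_mul_rpow_nhdsGT_zero hn').abs
    have h2 := h1.pow n
    rw [show (0:ℝ) ^ n = 0 from zero_pow hn.ne'] at h2
    refine h2.congr' ?_
    filter_upwards [self_mem_nhdsWithin] with t ht
    have ht' : (0:ℝ) < t := ht
    rw [abs_mul, mul_pow, abs_of_nonneg (Real.rpow_nonneg ht'.le _),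
      ← Real.rpow_natCast (t ^ (a / n)) n, ← Real.rpow_mul ht'.le,
      div_mul_cancel₀ _ (by exact_mod_cast hn.ne' : (n:ℝ) ≠ 0)]
    ring

lemma gfun_intervalIntegrable {ρ : ℂ} (hρ : -1 < ρ.re) (k : ℕ) {x : ℝ} (hx : 0 < x) :
    IntervalIntegrable (gfun ρ k) volume 0 x := by
  set a := min 1 x with ha
  have ha0 : 0 < a := lt_min one_pos hx
  have ha1 : a ≤ 1 := min_le_left _ _
  have h1 : IntervalIntegrable (gfun ρ k) volume 0 a := by
    rw [intervalIntegrable_iff_integrableOn_Ioc_of_le ha0.le]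
    set ε : ℝ := (ρ.re + 1) / (2 * (k + 1)) with hε
    have hε0 : 0 < ε := div_pos (by linarith) (by positivity)
    have hexp : -1 < ρ.re - k * ε := by
      have : (k:ℝ) * ε ≤ (k + 1) * ε := by
        apply mul_le_mul_of_nonneg_right _ hε0.le
        exact_mod_cast Nat.le_succ k
      have h2 : (k + 1 : ℝ) * ε = (ρ.re + 1) / 2 := by rw [hε]; field_simp
      nlinarith
    have hbint : IntegrableOn (fun t : ℝ => (1/ε) ^ k * t ^ (ρ.re - k * ε)) (Ioc 0 a)
        volume := by
      apply Integrable.const_mul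
      have := intervalIntegrable_rpow' (a := 0) (b := a) hexp
      rwa [intervalIntegrable_iff_integrableOn_Ioc_of_le ha0.le] at this
    refine hbint.mono' ?_ ?_
    · exact ((ContinuousOn.mono (fun t (ht : t ∈ Ioi (0:ℝ)) =>
        (gfun_continuousAt ρ k ht).continuousWithinAt) (fun t ht => ht.1)) :
        ContinuousOn (gfun ρ k) (Ioc 0 a)).aestronglyMeasurable measurableSet_Ioc
    · refine (ae_restrict_iff' measurableSet_Ioc).mpr (.of_forall fun t ht => ?_)
      have ht0 : 0 < t := ht.1
      have ht1 : t ≤ 1 := le_trans ht.2 ha1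
      rw [gfun_norm ρ k ht0]
      have hlog : |Real.log t| ≤ (1/ε) * t ^ (-ε) := by
        rw [abs_of_nonpos (Real.log_nonpos ht0.le ht1), ← Real.log_inv]
        have := Real.log_le_rpow_div (x := t⁻¹) (by positivity) hε0
        calc Real.log t⁻¹ ≤ (t⁻¹) ^ ε / ε := this
          _ = (1/ε) * t ^ (-ε) := by
              rw [Real.inv_rpow ht0.le, Real.rpow_neg ht0.le]
              ring
      calc t ^ ρ.re * |Real.log t| ^ k
          ≤ t ^ ρ.re * ((1/ε) * t ^ (-ε)) ^ k := by
            apply mul_le_mul_of_nonneg_left _ (Real.rpow_nonneg ht0.le _)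
            exact pow_le_pow_left₀ (abs_nonneg _) hlog k
        _ = (1/ε) ^ k * t ^ (ρ.re - k * ε) := by
            rw [mul_pow, ← Real.rpow_natCast (t ^ (-ε)), ← Real.rpow_mul ht0.le,
              Real.rpow_sub ht0, show -ε * (k:ℝ) = -((k:ℝ) * ε) by ring,
              Real.rpow_neg ht0.le]
            ring
  have h2 : IntervalIntegrable (gfun ρ k) volume a x := by
    apply ContinuousOn.intervalIntegrable
    intro t ht
    rw [uIcc_of_le (min_le_right 1 x)] at ht
    have : 0 < t := lt_of_lt_of_le ha0 ht.1
    exact (gfun_continuousAt ρ k this).continuousWithinAt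
  exact h1.trans h2

lemma gfun_hasDerivAt {ρ : ℂ} (hρ : -1 < ρ.re) (k : ℕ) {t : ℝ} (ht : 0 < t) :
    HasDerivAt (gfun (ρ+1) (k+1))
      ((ρ+1) * gfun ρ (k+1) t + ((k:ℂ)+1) * gfun ρ k t) t := by
  have hne : ρ + 1 ≠ 0 := by
    intro h
    have := congrArg Complex.re h
    simp at this; linarith
  have hρ1 : ρ ≠ -1 := by
    intro h; rw [h] at hρ; simp at hρ
  have h1 := hasDerivAt_ofReal_cpow_const' ht.ne' hρ1
  have hu : HasDerivAt (fun y : ℝ => (y:ℂ) ^ (ρ+1)) ((ρ+1) * (t:ℂ) ^ ρ) t := by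
    have h2 := h1.const_mul (ρ+1)
    have heq : (fun y : ℝ => (ρ+1) * ((y:ℂ) ^ (ρ+1) / (ρ+1))) =
        fun y : ℝ => (y:ℂ) ^ (ρ+1) := by
      funext y; field_simp
    rwa [heq] at h2
  have hl : HasDerivAt (fun y : ℝ => ((Real.log y : ℝ) : ℂ)) ((t⁻¹ : ℝ) : ℂ) t :=
    (Real.hasDerivAt_log ht.ne').ofReal_comp
  have hv := (hasDerivAt_pow (k+1) ((Real.log t : ℝ) : ℂ)).comp t hl
  have hF := hu.mul hv
  have hcpow : (t:ℂ) ^ (ρ+1) = (t:ℂ) ^ ρ * (t:ℂ) := by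
    rw [Complex.cpow_add _ _ (by exact_mod_cast ht.ne' : (t:ℂ) ≠ 0), Complex.cpow_one]
  convert hF using 1
  case e'_4 => rfl
  case e'_8 => rfl
  simp only [gfun, Nat.add_sub_cancel, hcpow, Function.comp_apply, Complex.ofReal_inv]
  have htc : (t:ℂ) ≠ 0 := by exact_mod_cast ht.ne'
  field_simp
  push_cast
  ring

lemma key_integral {ρ : ℂ} (hρ : -1 < ρ.re) (k : ℕ) {x : ℝ} (hx : 0 < x) :
    ∫ t in (0:ℝ)..x, ((ρ+1) * gfun ρ (k+1) t + ((k:ℂ)+1) * gfun ρ k t)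
      = (x:ℂ) ^ (ρ+1) * (Real.log x : ℂ) ^ (k+1) := by
  have hint : IntervalIntegrable
      (fun t => (ρ+1) * gfun ρ (k+1) t + ((k:ℂ)+1) * gfun ρ k t) volume 0 x :=
    ((gfun_intervalIntegrable hρ (k+1) hx).const_mul _).add
      ((gfun_intervalIntegrable hρ k hx).const_mul _)
  have ha : Tendsto (gfun (ρ+1) (k+1)) (𝓝[>] (0:ℝ)) (𝓝 0) := by
    rw [tendsto_zero_iff_norm_tendsto_zero]
    refine (tendsto_rpow_mul_abs_log_pow (by simpa using by linarith : (0:ℝ) < (ρ+1).re)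
      (k+1)).congr' ?_
    filter_upwards [self_mem_nhdsWithin] with t ht
    exact (gfun_norm (ρ+1) (k+1) ht).symm
  have hb : Tendsto (gfun (ρ+1) (k+1)) (𝓝[<] x) (𝓝 (gfun (ρ+1) (k+1) x)) :=
    (gfun_continuousAt (ρ+1) (k+1) hx).continuousWithinAt
  have := intervalIntegral.integral_eq_sub_of_hasDerivAt_of_tendsto hx
    (fun t htx => gfun_hasDerivAt hρ k htx.1) hint ha hb
  rw [this, sub_zero, gfun]

lemma rho_add_one_ne {ρ : ℂ} (hρ : -1 < ρ.re) : ρ + 1 ≠ 0 := by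
  intro h
  have := congrArg Complex.re h
  simp at this; linarith

lemma cesaroP_gfun_zero {ρ : ℂ} (hρ : -1 < ρ.re) {x : ℝ} (hx : 0 < x) :
    cesaroP (gfun ρ 0) x = (1/(ρ+1)) * gfun ρ 0 x := by
  have hne := rho_add_one_ne hρ
  have hxc : (x:ℂ) ≠ 0 := by exact_mod_cast hx.ne'
  have h0 : (∫ t in (0:ℝ)..x, gfun ρ 0 t) = ((x:ℂ) ^ (ρ+1)) / (ρ+1) := by
    have : (∫ t in (0:ℝ)..x, gfun ρ 0 t) = ∫ t in (0:ℝ)..x, (t:ℂ) ^ ρ := by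
      simp [gfun]
    rw [this, integral_cpow (Or.inl hρ)]
    norm_num [Complex.zero_cpow hne]
  rw [cesaroP, h0, gfun]
  rw [Complex.cpow_add _ _ hxc, Complex.cpow_one]
  field_simp

lemma cesaroP_gfun_succ {ρ : ℂ} (hρ : -1 < ρ.re) (k : ℕ) {x : ℝ} (hx : 0 < x) :
    cesaroP (gfun ρ (k+1)) x = (1/(ρ+1)) * gfun ρ (k+1) x
      - ((k:ℂ)+1) * (1/(ρ+1)) * cesaroP (gfun ρ k) x := by
  have hne := rho_add_one_ne hρ
  have hxc : (x:ℂ) ≠ 0 := by exact_mod_cast hx.ne'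
  have hkey := key_integral hρ k hx
  rw [intervalIntegral.integral_add ((gfun_intervalIntegrable hρ (k+1) hx).const_mul _)
      ((gfun_intervalIntegrable hρ k hx).const_mul _),
    intervalIntegral.integral_const_mul, intervalIntegral.integral_const_mul] at hkey
  rw [Complex.cpow_add _ _ hxc, Complex.cpow_one] at hkey
  simp only [gfun] at hkey
  simp only [cesaroP, gfun]
  field_simp
  linear_combination hkey

lemma cesaroP_gfun_span {ρ : ℂ} (hρ : -1 < ρ.re) (k : ℕ) :
    ∃ d : ℕ → ℂ, ∀ x : ℝ, 0 < x →
      cesaroP (gfun ρ k) x = (1/(ρ+1)) * gfun ρ k x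
        + ∑ j ∈ Finset.range k, d j * gfun ρ j x := by
  induction k with
  | zero =>
      exact ⟨fun _ => 0, fun x hx => by
        simpa using cesaroP_gfun_zero hρ hx⟩
  | succ k ih =>
      obtain ⟨d, hd⟩ := ih
      refine ⟨fun j => if j = k then -(((k:ℂ)+1) * (1/(ρ+1)) * (1/(ρ+1)))
        else -(((k:ℂ)+1) * (1/(ρ+1))) * d j, fun x hx => ?_⟩
      have h1 : ∑ j ∈ Finset.range (k+1),
          (if j = k then -(((k:ℂ)+1) * (1/(ρ+1)) * (1/(ρ+1)))
            else -(((k:ℂ)+1) * (1/(ρ+1))) * d j) * gfun ρ j x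
          = (∑ j ∈ Finset.range k, (-(((k:ℂ)+1) * (1/(ρ+1))) * d j) * gfun ρ j x)
            + -(((k:ℂ)+1) * (1/(ρ+1)) * (1/(ρ+1))) * gfun ρ k x := by
        rw [Finset.sum_range_succ, if_pos rfl]
        congr 1
        exact Finset.sum_congr rfl fun j hj => by
          rw [if_neg (Finset.mem_range.mp hj).ne]
      have h2 : ∑ j ∈ Finset.range k, (-(((k:ℂ)+1) * (1/(ρ+1))) * d j) * gfun ρ j x
          = -(((k:ℂ)+1) * (1/(ρ+1))) * ∑ j ∈ Finset.range k, d j * gfun ρ j x := by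
        rw [Finset.mul_sum]
        exact Finset.sum_congr rfl fun j hj => by ring
      rw [cesaroP_gfun_succ hρ k hx, hd x hx]
      beta_reduce
      rw [h1, h2]
      ring

lemma cesaro_step {ρ : ℂ} (hρ : -1 < ρ.re) (n : ℕ) (c : ℕ → ℂ) (f : ℝ → ℂ)
    (hf : ∀ x : ℝ, 0 < x → f x = ∑ j ∈ Finset.range n, c j * gfun ρ j x) :
    ∃ c' : ℕ → ℂ, ∀ x : ℝ, 0 < x →
      cesaroPSub (1/(ρ+1)) f x = ∑ j ∈ Finset.range (n-1), c' j * gfun ρ j x := by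
  choose D hD using fun j => cesaroP_gfun_span hρ j
  refine ⟨fun l => ∑ j ∈ Finset.range n, c j * (if l < j then D j l else 0),
    fun x hx => ?_⟩
  have hP : cesaroP f x = ∑ j ∈ Finset.range n, c j * cesaroP (gfun ρ j) x := by
    have hcong : (∫ t in (0:ℝ)..x, f t)
        = ∫ t in (0:ℝ)..x, ∑ j ∈ Finset.range n, c j * gfun ρ j t := by
      apply intervalIntegral.integral_congr_ae
      refine MeasureTheory.ae_of_all _ fun t ht => ?_
      rw [Set.uIoc_of_le hx.le] at ht
      exact hf t ht.1
    rw [cesaroP, hcong, intervalIntegral.integral_finset_sum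
      (fun j _ => (gfun_intervalIntegrable hρ j hx).const_mul (c j)),
      Finset.mul_sum]
    exact Finset.sum_congr rfl fun j _ => by
      rw [intervalIntegral.integral_const_mul, cesaroP]; ring
  have hstep : cesaroPSub (1/(ρ+1)) f x
      = ∑ j ∈ Finset.range n, c j * ∑ l ∈ Finset.range j, D j l * gfun ρ l x := by
    rw [cesaroPSub, hP, hf x hx, Finset.mul_sum, ← Finset.sum_sub_distrib]
    refine Finset.sum_congr rfl fun j _ => ?_
    rw [hD j x hx]
    ring
  rw [hstep]
  have hinner : ∀ j ∈ Finset.range n,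
      (∑ l ∈ Finset.range j, D j l * gfun ρ l x)
        = ∑ l ∈ Finset.range (n-1), (if l < j then D j l else 0) * gfun ρ l x := by
    intro j hj
    have hjn : j ≤ n - 1 := by
      have := Finset.mem_range.mp hj; omega
    have h1 : (∑ l ∈ Finset.range j, D j l * gfun ρ l x)
        = ∑ l ∈ Finset.range j, (if l < j then D j l else 0) * gfun ρ l x :=
      Finset.sum_congr rfl fun l hl => by rw [if_pos (Finset.mem_range.mp hl)]
    rw [h1]
    refine Finset.sum_subset (Finset.range_subset_range.mpr hjn) fun l _ hl => ?_
    rw [if_neg (fun h => hl (Finset.mem_range.mpr h)), zero_mul]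
  rw [Finset.sum_congr rfl fun j hj => by rw [hinner j hj]]
  rw [Finset.sum_congr rfl fun j _ => Finset.mul_sum _ _ _, Finset.sum_comm]
  refine Finset.sum_congr rfl fun l _ => ?_
  rw [Finset.sum_mul]
  exact Finset.sum_congr rfl fun j _ => by ring
/-- For `Re ρ > -1` and `m ∈ ℤ≥0`, the function `x ^ ρ (ln x)^m` is a generalized
eigenfunction of the Cesàro operator with eigenvalue `1/(ρ+1)`:
`(P - 1/(ρ+1))^(m+1)` annihilates it (on `(0,∞)`). -/

theorem cesaro_generalized_eigenfunction (ρ : ℂ) (hρ : -1 < ρ.re) (m : ℕ) :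
    ∀ x : ℝ, 0 < x →
      ((cesaroPSub (1 / (ρ + 1)))^[m + 1]
        (fun y : ℝ => (y : ℂ) ^ ρ * (Real.log y : ℂ) ^ m)) x = 0 := by
  have main : ∀ i : ℕ, ∃ c : ℕ → ℂ, ∀ x : ℝ, 0 < x →
      ((cesaroPSub (1/(ρ+1)))^[i] (gfun ρ m)) x
        = ∑ j ∈ Finset.range (m + 1 - i), c j * gfun ρ j x := by
    intro i
    induction i with
    | zero =>
        refine ⟨fun j => if j = m then 1 else 0, fun x hx => ?_⟩
        rw [Function.iterate_zero_apply, Nat.sub_zero]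
        simp [ite_mul, Finset.sum_ite_eq', Nat.lt_succ_self]
    | succ i ih =>
        obtain ⟨c, hc⟩ := ih
        obtain ⟨c', hc'⟩ := cesaro_step hρ (m+1-i) c _ hc
        refine ⟨c', fun x hx => ?_⟩
        rw [Function.iterate_succ_apply']
        rw [show m + 1 - (i+1) = (m+1-i) - 1 by omega]
        exact hc' x hx
  intro x hx
  obtain ⟨c, hc⟩ := main (m+1)
  have h := hc x hx
  simp only [Nat.sub_self, Finset.range_zero, Finset.sum_empty] at h
  exact h
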